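/- (Entropy estimation deviation) Let p ∈ Δ_{m−1} and p̂_n be the empirical distribution of n i.i.d. samples from p. Then for all δ ∈ (0,1], with probability at least 1 − δ, |H(p̂_n) − H(p)| ≤ √(2 log²(n) log(2/δ)/n) + min( ((m−1)log(e(1 + n/(m−1))) + 1)/n , log m ). -/

import Mathlib

open Real Finset
open scoped Classical

set_option maxHeartbeats 1000000

/-- Shannon entropy of a finite distribution. -/
noncomputable def entropy {X : Type*} [Fintype X] (d : X → ℝ) : ℝ :=
  -∑ x, d x * Real.log (d x)

/-- Empirical distribution of the sample `ω = (ω_1, …, ω_n)`. -/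
noncomputable def empDist {n m : ℕ} (ω : Fin n → Fin m) (k : Fin m) : ℝ :=
  ((Finset.univ.filter (fun i : Fin n => ω i = k)).card : ℝ) / n

noncomputable def cnt {n m : ℕ} (ω : Fin n → Fin m) (k : Fin m) : ℕ :=
  (Finset.univ.filter (fun i : Fin n => ω i = k)).card

lemma upos (p : ℝ) (hp0 : 0 ≤ p) (hp1 : p ≤ 1) (h : ℝ) : 0 < 1 - p + p * Real.exp h := by
  rcases eq_or_lt_of_le hp0 with h0 | h0
  · simp [← h0]
  · have := Real.exp_pos h
    nlinarith

lemma hoeffding_aux (p : ℝ) (hp0 : 0 ≤ p) (hp1 : p ≤ 1) (h : ℝ) :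
    -(p*h) + Real.log (1 - p + p * Real.exp h) ≤ h^2/8 := by
  set u : ℝ → ℝ := fun h => 1 - p + p * Real.exp h with hu
  have hupos : ∀ x, 0 < u x := upos p hp0 hp1
  set G : ℝ → ℝ := fun h => h^2/8 - (-(p*h) + Real.log (u h)) with hG
  set G' : ℝ → ℝ := fun h => h/4 + p - p * Real.exp h / u h with hG'
  have hdu : ∀ x, HasDerivAt u (p * Real.exp x) x := fun x =>
    ((Real.hasDerivAt_exp x).const_mul p).const_add (1 - p)
  have hdG : ∀ x, HasDerivAt G (G' x) x := by
    intro x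
    have h1 : HasDerivAt (fun h : ℝ => h^2/8) (x/4) x := by
      have := (hasDerivAt_pow 2 x).div_const 8
      exact this.congr_deriv (by ring)
    have h2 : HasDerivAt (fun h : ℝ => -(p*h) + Real.log (u h))
        (-p + p * Real.exp x / u x) x := by
      have hl : HasDerivAt (fun h => Real.log (u h)) (p * Real.exp x / u x) x :=
        (hdu x).log (ne_of_gt (hupos x))
      have hlin : HasDerivAt (fun h : ℝ => -(p*h)) (-p) x := by
        have := (hasDerivAt_id x).const_mul p
        exact this.neg.congr_deriv (by ring)
      exact hlin.add hl
    have := h1.sub h2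
    exact this.congr_deriv (by simp only [hG']; ring)
  have hdG' : ∀ x, HasDerivAt G'
      (1/4 - (p * Real.exp x * u x - p * Real.exp x * (p * Real.exp x)) / (u x)^2) x := by
    intro x
    have hq : HasDerivAt (fun h => p * Real.exp h / u h)
        ((p * Real.exp x * u x - p * Real.exp x * (p * Real.exp x)) / (u x)^2) x :=
      ((Real.hasDerivAt_exp x).const_mul p).div (hdu x) (ne_of_gt (hupos x))
    have hlin : HasDerivAt (fun h : ℝ => h/4 + p) (1/4) x := by
      have := (hasDerivAt_id x).div_const 4
      simpa using this.add_const p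
    exact hlin.sub hq
  have hG''nonneg : ∀ x, 0 ≤ 1/4 - (p * Real.exp x * u x - p * Real.exp x * (p * Real.exp x)) / (u x)^2 := by
    intro x
    rw [sub_nonneg, div_le_iff₀ (pow_pos (hupos x) 2)]
    have hx := Real.exp_pos x
    have hux : u x = 1 - p + p * Real.exp x := rfl
    rw [hux]
    nlinarith [sq_nonneg ((1-p) - p*Real.exp x)]
  have hmono : Monotone G' := by
    apply monotone_of_deriv_nonneg
    · exact fun x => (hdG' x).differentiableAt
    · intro x; rw [(hdG' x).deriv]; exact hG''nonneg x
  have hG'0 : G' 0 = 0 := by simp [hG', hu]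
  have key : ∀ x, 0 ≤ G x := by
    have hG0 : G 0 = 0 := by simp [hG, hu]
    intro x
    rcases le_total 0 x with hx | hx
    · have : MonotoneOn G (Set.Ici 0) := by
        apply monotoneOn_of_deriv_nonneg (convex_Ici 0)
        · exact (fun y _ => ((hdG y).differentiableAt).continuousAt.continuousWithinAt)
        · exact fun y _ => ((hdG y).differentiableAt).differentiableWithinAt
        · intro y hy
          rw [(hdG y).deriv, ← hG'0]
          exact hmono (le_of_lt (by simpa using hy))
      have := this (Set.self_mem_Ici) (by exact hx) hx
      rw [hG0] at this; exact this
    · have : AntitoneOn G (Set.Iic 0) := by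
        apply antitoneOn_of_deriv_nonpos (convex_Iic 0)
        · exact (fun y _ => ((hdG y).differentiableAt).continuousAt.continuousWithinAt)
        · exact fun y _ => ((hdG y).differentiableAt).differentiableWithinAt
        · intro y hy
          rw [(hdG y).deriv, ← hG'0]
          exact hmono (le_of_lt (by simpa using hy))
      have := this (by exact hx) (Set.self_mem_Iic) hx
      rw [hG0] at this; exact this
  have := key h
  simp only [hG] at this
  linarith

lemma exp_le_interp (t a b x : ℝ) (hax : a ≤ x) (hxb : x ≤ b) (hab : a < b) :
    Real.exp (t*x) ≤ (b - x)/(b-a) * Real.exp (t*a) + (x - a)/(b-a) * Real.exp (t*b) := by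
  have hba : (0:ℝ) < b - a := by linarith
  have h1 : (0:ℝ) ≤ (b - x)/(b-a) := div_nonneg (by linarith) hba.le
  have h2 : (0:ℝ) ≤ (x - a)/(b-a) := div_nonneg (by linarith) hba.le
  have h3 : (b - x)/(b-a) + (x - a)/(b-a) = 1 := by field_simp; ring
  have := convexOn_exp.2 (Set.mem_univ (t*a)) (Set.mem_univ (t*b)) h1 h2 h3
  simp only [smul_eq_mul] at this
  have harg : (b - x)/(b-a) * (t*a) + (x - a)/(b-a) * (t*b) = t * x := by
    field_simp; ring
  rwa [harg] at this

lemma hoeffding_fin {κ : Type*} [Fintype κ] (q X : κ → ℝ) (hq : ∀ x, 0 ≤ q x)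
    (hq1 : ∑ x, q x = 1) (a b : ℝ) (hab : ∀ x, a ≤ X x ∧ X x ≤ b)
    (hmean : ∑ x, q x * X x = 0) (t : ℝ) :
    ∑ x, q x * Real.exp (t * X x) ≤ Real.exp (t^2 * (b-a)^2 / 8) := by
  have ha0 : a ≤ 0 := by
    calc a = ∑ x, q x * a := by rw [← Finset.sum_mul, hq1, one_mul]
    _ ≤ ∑ x, q x * X x := Finset.sum_le_sum (fun x _ => mul_le_mul_of_nonneg_left (hab x).1 (hq x))
    _ = 0 := hmean
  have hb0 : (0:ℝ) ≤ b := by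
    calc (0:ℝ) = ∑ x, q x * X x := hmean.symm
    _ ≤ ∑ x, q x * b := Finset.sum_le_sum (fun x _ => mul_le_mul_of_nonneg_left (hab x).2 (hq x))
    _ = b := by rw [← Finset.sum_mul, hq1, one_mul]
  rcases eq_or_lt_of_le (le_trans ha0 hb0) with heq | hlt
  · -- a = 0 = b, X ≡ 0
    have ha : a = 0 := by linarith
    have hb : b = 0 := by linarith
    have hX : ∀ x, X x = 0 := fun x => le_antisymm (hb ▸ (hab x).2) (ha ▸ (hab x).1)
    simp only [hX, mul_zero, Real.exp_zero, mul_one, hq1]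
    exact Real.one_le_exp (by positivity)
  · have hba : (0:ℝ) < b - a := by linarith
    set p' : ℝ := -a/(b-a) with hp'
    have hp0 : 0 ≤ p' := div_nonneg (by linarith) hba.le
    have hp1 : p' ≤ 1 := by rw [hp', div_le_one hba]; linarith
    set h : ℝ := t * (b - a) with hh
    have step1 : ∑ x, q x * Real.exp (t * X x)
        ≤ (b * Real.exp (t*a) - a * Real.exp (t*b))/(b-a) := by
      calc ∑ x, q x * Real.exp (t * X x)
          ≤ ∑ x, q x * ((b - X x)/(b-a) * Real.exp (t*a) + (X x - a)/(b-a) * Real.exp (t*b)) :=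
            Finset.sum_le_sum (fun x _ => mul_le_mul_of_nonneg_left
              (exp_le_interp t a b (X x) (hab x).1 (hab x).2 hlt) (hq x))
      _ = (b * Real.exp (t*a) - a * Real.exp (t*b))/(b-a) := by
          have expand : ∀ x, q x * ((b - X x)/(b-a) * Real.exp (t*a) + (X x - a)/(b-a) * Real.exp (t*b))
              = (q x * b - q x * X x) * (Real.exp (t*a)/(b-a))
                + (q x * X x - q x * a) * (Real.exp (t*b)/(b-a)) := by
            intro x; field_simp
          simp only [expand, Finset.sum_add_distrib, ← Finset.sum_mul, Finset.sum_sub_distrib,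
            hmean, ← Finset.sum_mul]
          rw [hq1]
          field_simp; ring
    have step2 : (b * Real.exp (t*a) - a * Real.exp (t*b))/(b-a)
        = Real.exp (-(p'*h)) * (1 - p' + p' * Real.exp h) := by
      have h1 : Real.exp (t*b) = Real.exp (t*a) * Real.exp h := by
        rw [← Real.exp_add, hh]; ring_nf
      have hne : b - a ≠ 0 := ne_of_gt hba
      rw [h1, hp', hh]
      field_simp
      ring
    have hupos : 0 < 1 - p' + p' * Real.exp h := by
      rcases eq_or_lt_of_le hp0 with h0 | h0
      · simp [← h0]
      · nlinarith [Real.exp_pos h, hp1]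
    calc ∑ x, q x * Real.exp (t * X x)
        ≤ Real.exp (-(p'*h)) * (1 - p' + p' * Real.exp h) := by rw [← step2]; exact step1
    _ = Real.exp (-(p'*h) + Real.log (1 - p' + p' * Real.exp h)) := by
        rw [Real.exp_add, Real.exp_log hupos]
    _ ≤ Real.exp (h^2/8) := Real.exp_le_exp.2 (hoeffding_aux p' hp0 hp1 h)
    _ = Real.exp (t^2 * (b-a)^2 / 8) := by rw [hh]; ring_nf

lemma sum_pi_succ {κ : Type*} [Fintype κ] {n : ℕ} (F : (Fin (n+1) → κ) → ℝ) :
    ∑ ω : Fin (n+1) → κ, F ω = ∑ x : κ, ∑ τ : Fin n → κ, F (Fin.cons x τ) := by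
  have := Fintype.sum_equiv (Fin.consEquiv (fun _ : Fin (n+1) => κ))
    (fun y : κ × (Fin n → κ) => F (Fin.cons y.1 y.2)) F (fun y => rfl)
  rw [← this, Fintype.sum_prod_type]

lemma mcdiarmid_mgf {κ : Type*} [Fintype κ] [Nonempty κ] (q : κ → ℝ) (hq : ∀ x, 0 ≤ q x)
    (hq1 : ∑ x, q x = 1) :
    ∀ (n : ℕ) (f : (Fin n → κ) → ℝ) (c : ℝ) (_hc : 0 ≤ c)
      (_hbd : ∀ ω i x, |f (Function.update ω i x) - f ω| ≤ c) (t : ℝ),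
      ∑ ω, (∏ i, q (ω i)) * Real.exp (t * (f ω - ∑ ω', (∏ i, q (ω' i)) * f ω'))
        ≤ Real.exp (t^2 * n * c^2 / 8) := by
  intro n
  induction n with
  | zero =>
    intro f c hc hbd t
    rw [Fintype.sum_unique, Fintype.sum_unique]
    simp only [Finset.univ_eq_empty, Finset.prod_empty, one_mul]
    rw [sub_self, mul_zero, Real.exp_zero]
    exact Real.one_le_exp (by positivity)
  | succ n IH =>
    intro f c hc hbd t
    set W : (Fin n → κ) → ℝ := fun τ => ∏ i, q (τ i) with hW
    have hWnn : ∀ τ, 0 ≤ W τ := fun τ => Finset.prod_nonneg (fun i _ => hq _)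
    set g : (Fin n → κ) → ℝ := fun τ => ∑ x, q x * f (Fin.cons x τ) with hg
    set Ef : ℝ := ∑ ω' : Fin (n+1) → κ, (∏ i, q (ω' i)) * f ω' with hEf
    have hprodcons : ∀ (x : κ) (τ : Fin n → κ),
        (∏ i : Fin (n+1), q ((Fin.cons x τ : Fin (n+1) → κ) i)) = q x * W τ := by
      intro x τ
      rw [Fin.prod_univ_succ]
      simp [hW]
    have hEfg : Ef = ∑ τ, W τ * g τ := by
      rw [hEf, sum_pi_succ, Finset.sum_comm]
      congr 1; funext τ
      rw [hg, Finset.mul_sum]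
      congr 1; funext x
      rw [hprodcons]; ring
    have hgbd : ∀ τ i y, |g (Function.update τ i y) - g τ| ≤ c := by
      intro τ i y
      rw [hg]
      simp only [← Finset.sum_sub_distrib]
      calc |∑ x, (q x * f (Fin.cons x (Function.update τ i y)) - q x * f (Fin.cons x τ))|
          ≤ ∑ x, |q x * f (Fin.cons x (Function.update τ i y)) - q x * f (Fin.cons x τ)| :=
            Finset.abs_sum_le_sum_abs _ _
        _ ≤ ∑ x, q x * c := by
            apply Finset.sum_le_sum
            intro x _
            rw [← mul_sub, abs_mul, abs_of_nonneg (hq x)]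
            apply mul_le_mul_of_nonneg_left _ (hq x)
            rw [Fin.cons_update]
            exact hbd _ _ _
        _ = c := by rw [← Finset.sum_mul, hq1, one_mul]
    -- inner Hoeffding bound
    have hinner : ∀ τ, ∑ x, q x * Real.exp (t * (f (Fin.cons x τ) - g τ))
        ≤ Real.exp (t^2 * c^2 / 8) := by
      intro τ
      obtain ⟨x₀, -, hx₀⟩ := Finset.exists_min_image Finset.univ
        (fun x => f (Fin.cons x τ)) ⟨Classical.arbitrary κ, Finset.mem_univ _⟩
      obtain ⟨x₁, -, hx₁⟩ := Finset.exists_max_image Finset.univ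
        (fun x => f (Fin.cons x τ)) ⟨Classical.arbitrary κ, Finset.mem_univ _⟩
      set a : ℝ := f (Fin.cons x₀ τ) - g τ
      set b : ℝ := f (Fin.cons x₁ τ) - g τ
      have hab : ∀ x, a ≤ f (Fin.cons x τ) - g τ ∧ f (Fin.cons x τ) - g τ ≤ b := by
        intro x
        constructor
        · exact sub_le_sub_right (hx₀ x (Finset.mem_univ x)) _
        · exact sub_le_sub_right (hx₁ x (Finset.mem_univ x)) _
      have hmean : ∑ x, q x * (f (Fin.cons x τ) - g τ) = 0 := by
        simp only [mul_sub, Finset.sum_sub_distrib, ← Finset.sum_mul, hq1, one_mul]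
        rw [hg]; ring
      have hba : b - a ≤ c := by
        have h2 := hbd (Fin.cons x₀ τ) 0 x₁
        rw [Fin.update_cons_zero] at h2
        have h3 := (abs_le.1 h2).2
        have hab2 : b - a = f (Fin.cons x₁ τ) - f (Fin.cons x₀ τ) := by ring
        rw [hab2]; linarith
      calc ∑ x, q x * Real.exp (t * (f (Fin.cons x τ) - g τ))
          ≤ Real.exp (t^2 * (b-a)^2 / 8) := hoeffding_fin q _ hq hq1 a b hab hmean t
        _ ≤ Real.exp (t^2 * c^2 / 8) := by
            apply Real.exp_le_exp.2
            have h1 : 0 ≤ b - a := by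
              have := (hab (Classical.arbitrary κ)); linarith [this.1, this.2]
            have h2 : (b-a)^2 ≤ c^2 := by nlinarith
            have h3 := mul_le_mul_of_nonneg_left h2 (sq_nonneg t)
            clear_value a b
            linarith
    calc ∑ ω : Fin (n+1) → κ, (∏ i, q (ω i)) * Real.exp (t * (f ω - Ef))
        = ∑ τ, W τ * ((∑ x, q x * Real.exp (t * (f (Fin.cons x τ) - g τ)))
            * Real.exp (t * (g τ - Ef))) := by
          rw [sum_pi_succ (fun ω => (∏ i, q (ω i)) * Real.exp (t * (f ω - Ef))),
            Finset.sum_comm]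
          congr 1; funext τ
          rw [Finset.sum_mul, Finset.mul_sum]
          congr 1; funext x
          rw [hprodcons, show t * (f (Fin.cons x τ) - Ef)
            = t * (f (Fin.cons x τ) - g τ) + t * (g τ - Ef) by ring, Real.exp_add]
          ring
      _ ≤ ∑ τ, W τ * (Real.exp (t^2 * c^2 / 8) * Real.exp (t * (g τ - Ef))) := by
          apply Finset.sum_le_sum
          intro τ _
          exact mul_le_mul_of_nonneg_left
            (mul_le_mul_of_nonneg_right (hinner τ) (Real.exp_nonneg _)) (hWnn τ)
      _ = Real.exp (t^2 * c^2 / 8) * ∑ τ, W τ * Real.exp (t * (g τ - ∑ τ', W τ' * g τ')) := by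
          rw [Finset.mul_sum, ← hEfg]
          congr 1; funext τ; ring
      _ ≤ Real.exp (t^2 * c^2 / 8) * Real.exp (t^2 * n * c^2 / 8) := by
          apply mul_le_mul_of_nonneg_left _ (Real.exp_nonneg _)
          exact IH g c hc hgbd t
      _ = Real.exp (t^2 * (n+1 : ℕ) * c^2 / 8) := by
          rw [← Real.exp_add]
          congr 1
          push_cast
          ring

lemma mcdiarmid_tail_one {κ : Type*} [Fintype κ] [Nonempty κ] (q : κ → ℝ) (hq : ∀ x, 0 ≤ q x)
    (hq1 : ∑ x, q x = 1) (n : ℕ) (f : (Fin n → κ) → ℝ) (c : ℝ) (hc : 0 ≤ c)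
    (hbd : ∀ ω i x, |f (Function.update ω i x) - f ω| ≤ c) (s : ℝ) (hs : 0 < s)
    (hnc : 0 < (n:ℝ) * c^2) :
    ∑ ω, (if s ≤ f ω - ∑ ω', (∏ i, q (ω' i)) * f ω' then (∏ i, q (ω i)) else 0)
      ≤ Real.exp (-2*s^2/((n:ℝ)*c^2)) := by
  set Ef : ℝ := ∑ ω', (∏ i, q (ω' i)) * f ω' with hEf
  set t : ℝ := 4*s/((n:ℝ)*c^2) with ht
  have ht0 : 0 < t := by positivity
  have step1 : ∑ ω, (if s ≤ f ω - Ef then (∏ i, q (ω i)) else 0)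
      ≤ ∑ ω, (∏ i, q (ω i)) * (Real.exp (t * (f ω - Ef)) * Real.exp (-(t*s))) := by
    apply Finset.sum_le_sum
    intro ω _
    have hW : 0 ≤ ∏ i, q (ω i) := Finset.prod_nonneg (fun i _ => hq _)
    by_cases h : s ≤ f ω - Ef
    · rw [if_pos h, ← Real.exp_add]
      nth_rewrite 1 [← mul_one (∏ i, q (ω i))]
      apply mul_le_mul_of_nonneg_left _ hW
      rw [show t * (f ω - Ef) + -(t*s) = t * ((f ω - Ef) - s) by ring]
      exact Real.one_le_exp (by nlinarith)
    · rw [if_neg h]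
      positivity
  have step2 : ∑ ω, (∏ i, q (ω i)) * (Real.exp (t * (f ω - Ef)) * Real.exp (-(t*s)))
      ≤ Real.exp (t^2 * n * c^2 / 8) * Real.exp (-(t*s)) := by
    rw [show ∀ g : (Fin n → κ) → ℝ, ∑ ω, (∏ i, q (ω i)) * (g ω * Real.exp (-(t*s)))
        = (∑ ω, (∏ i, q (ω i)) * g ω) * Real.exp (-(t*s)) from fun g => by
          rw [Finset.sum_mul]; congr 1; funext ω; ring]
    exact mul_le_mul_of_nonneg_right (mcdiarmid_mgf q hq hq1 n f c hc hbd t)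
      (Real.exp_nonneg _)
  have step3 : Real.exp (t^2 * n * c^2 / 8) * Real.exp (-(t*s))
      = Real.exp (-2*s^2/((n:ℝ)*c^2)) := by
    rw [← Real.exp_add]
    congr 1
    have hne : ((n:ℝ)*c^2) ≠ 0 := ne_of_gt hnc
    rw [ht]
    field_simp
    ring
  calc ∑ ω, (if s ≤ f ω - Ef then (∏ i, q (ω i)) else 0)
      ≤ ∑ ω, (∏ i, q (ω i)) * (Real.exp (t * (f ω - Ef)) * Real.exp (-(t*s))) := step1
    _ ≤ Real.exp (t^2 * n * c^2 / 8) * Real.exp (-(t*s)) := step2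
    _ = Real.exp (-2*s^2/((n:ℝ)*c^2)) := step3

lemma mcdiarmid_tail {κ : Type*} [Fintype κ] [Nonempty κ] (q : κ → ℝ) (hq : ∀ x, 0 ≤ q x)
    (hq1 : ∑ x, q x = 1) (n : ℕ) (f : (Fin n → κ) → ℝ) (c : ℝ) (hc : 0 ≤ c)
    (hbd : ∀ ω i x, |f (Function.update ω i x) - f ω| ≤ c) (s : ℝ) (hs : 0 < s)
    (hnc : 0 < (n:ℝ) * c^2) :
    ∑ ω, (if s ≤ |f ω - ∑ ω', (∏ i, q (ω' i)) * f ω'| then (∏ i, q (ω i)) else 0)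
      ≤ 2 * Real.exp (-2*s^2/((n:ℝ)*c^2)) := by
  set Ef : ℝ := ∑ ω', (∏ i, q (ω' i)) * f ω' with hEf
  have hneg : ∀ ω' : Fin n → κ, (fun ω => -f ω) ω' - ∑ ω'', (∏ i, q (ω'' i)) * (fun ω => -f ω) ω''
      = -(f ω' - Ef) := by
    intro ω'
    simp only [hEf, mul_neg, Finset.sum_neg_distrib]
    ring
  have h2 := mcdiarmid_tail_one q hq hq1 n (fun ω => -f ω) c hc
    (fun ω i x => by
      have h := hbd ω i x
      rw [abs_sub_comm] at h
      calc |(fun ω => -f ω) (Function.update ω i x) - (fun ω => -f ω) ω|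
          = |f ω - f (Function.update ω i x)| := by simp only []; rw [show -f (Function.update ω i x) - -f ω = f ω - f (Function.update ω i x) by ring]
        _ ≤ c := h) s hs hnc
  simp only [hneg] at h2
  have h1 := mcdiarmid_tail_one q hq hq1 n f c hc hbd s hs hnc
  rw [← hEf] at h1
  have pointwise : ∀ ω : Fin n → κ, (if s ≤ |f ω - Ef| then (∏ i, q (ω i)) else 0)
      ≤ (if s ≤ f ω - Ef then (∏ i, q (ω i)) else 0)
        + (if s ≤ -(f ω - Ef) then (∏ i, q (ω i)) else 0) := by
    intro ω
    have hW : 0 ≤ ∏ i, q (ω i) := Finset.prod_nonneg (fun i _ => hq _)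
    by_cases h : s ≤ |f ω - Ef|
    · rw [if_pos h]
      rcases abs_cases (f ω - Ef) with ⟨he, -⟩ | ⟨he, -⟩
      · rw [he] at h
        rw [if_pos h]
        have : (0:ℝ) ≤ if s ≤ -(f ω - Ef) then (∏ i, q (ω i)) else 0 := by
          split <;> simp [hW]
        linarith
      · rw [he] at h
        rw [if_pos h]
        have : (0:ℝ) ≤ if s ≤ f ω - Ef then (∏ i, q (ω i)) else 0 := by
          split <;> simp [hW]
        linarith
    · rw [if_neg h]
      have h1' : (0:ℝ) ≤ if s ≤ f ω - Ef then (∏ i, q (ω i)) else 0 := by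
        split <;> simp [hW]
      have h2' : (0:ℝ) ≤ if s ≤ -(f ω - Ef) then (∏ i, q (ω i)) else 0 := by
        split <;> simp [hW]
      linarith
  calc ∑ ω, (if s ≤ |f ω - Ef| then (∏ i, q (ω i)) else 0)
      ≤ ∑ ω, ((if s ≤ f ω - Ef then (∏ i, q (ω i)) else 0)
          + (if s ≤ -(f ω - Ef) then (∏ i, q (ω i)) else 0)) :=
        Finset.sum_le_sum (fun ω _ => pointwise ω)
    _ = (∑ ω, (if s ≤ f ω - Ef then (∏ i, q (ω i)) else 0))
        + ∑ ω, (if s ≤ -(f ω - Ef) then (∏ i, q (ω i)) else 0) := Finset.sum_add_distrib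
    _ ≤ 2 * Real.exp (-2*s^2/((n:ℝ)*c^2)) := by linarith


/-- The step bound for `φ(y) = -y log y` on the grid `ℕ/n`. -/
lemma phi_step (n a : ℕ) (h : a + 1 ≤ n) :
    |(-((((a:ℝ)+1)/n) * Real.log (((a:ℝ)+1)/n))) - (-(((a:ℝ)/n) * Real.log ((a:ℝ)/n)))|
      ≤ Real.log n / n := by
  have hn0 : 0 < (n:ℝ) := by
    have : 1 ≤ n := le_trans (Nat.le_add_left 1 a) h
    exact_mod_cast Nat.lt_of_lt_of_le Nat.zero_lt_one this
  have hlogn : 0 ≤ Real.log n := Real.log_natCast_nonneg n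
  rcases Nat.eq_zero_or_pos a with rfl | ha
  · -- a = 0
    simp only [Nat.cast_zero, zero_add, zero_div, Real.log_zero, mul_zero, zero_mul, neg_zero,
      sub_zero]
    rw [Real.log_div one_ne_zero (ne_of_gt hn0), Real.log_one,
      show -(1/(n:ℝ) * (0 - Real.log n)) = Real.log n / n by ring,
      abs_of_nonneg (by positivity)]
  · -- a ≥ 1
    have ha0 : 0 < (a:ℝ) := by exact_mod_cast ha
    have ha1 : 0 < (a:ℝ) + 1 := by linarith
    have e1 : Real.log (((a:ℝ)+1)/n) = Real.log ((a:ℝ)+1) - Real.log n :=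
      Real.log_div (ne_of_gt ha1) (ne_of_gt hn0)
    have e2 : Real.log ((a:ℝ)/n) = Real.log (a:ℝ) - Real.log n :=
      Real.log_div (ne_of_gt ha0) (ne_of_gt hn0)
    set D : ℝ := ((a:ℝ)+1) * Real.log ((a:ℝ)+1) - (a:ℝ) * Real.log (a:ℝ) with hD
    have key : (-((((a:ℝ)+1)/n) * Real.log (((a:ℝ)+1)/n))) - (-(((a:ℝ)/n) * Real.log ((a:ℝ)/n)))
        = (Real.log n - D) / n := by
      rw [e1, e2, hD]; field_simp; ring
    rw [key]
    -- need 0 ≤ D ≤ 2 log n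
    have hDnn : 0 ≤ D := by
      rw [hD]
      have h1 : Real.log (a:ℝ) ≤ Real.log ((a:ℝ)+1) := Real.log_le_log ha0 (by linarith)
      have h2 : 0 ≤ Real.log (a:ℝ) := by
        rcases Nat.lt_or_ge a 1 with h' | h'
        · omega
        · exact Real.log_nonneg (by exact_mod_cast h')
      nlinarith
    have hD2 : D ≤ 2 * Real.log n := by
      have han : (a:ℝ) + 1 ≤ n := by exact_mod_cast h
      have hlogan : Real.log ((a:ℝ)+1) ≤ Real.log n := Real.log_le_log ha1 han
      rcases Nat.lt_or_ge a 2 with h' | h'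
      · -- a = 1
        have : a = 1 := by omega
        subst this
        rw [hD]
        push_cast at hlogan ⊢
        norm_num
        have h2n : Real.log 2 ≤ Real.log n := by
          calc Real.log 2 = Real.log ((1:ℝ)+1) := by norm_num
          _ ≤ Real.log n := by push_cast; linarith [hlogan]
        linarith
      · -- a ≥ 2
        have ha2 : (2:ℝ) ≤ (a:ℝ) := by exact_mod_cast h'
        have hlog1 : 1 ≤ Real.log ((a:ℝ)+1) := by
          have h1 := Real.exp_one_lt_d9
          have hexp : Real.exp 1 ≤ (a:ℝ)+1 := by
            have h3 : (2.7182818286:ℝ) ≤ 3 := by norm_num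
            linarith
          calc (1:ℝ) = Real.log (Real.exp 1) := (Real.log_exp 1).symm
          _ ≤ Real.log ((a:ℝ)+1) := Real.log_le_log (Real.exp_pos 1) hexp
        have hsplit : D = Real.log ((a:ℝ)+1) + (a:ℝ) * (Real.log ((a:ℝ)+1) - Real.log (a:ℝ)) := by
          rw [hD]; ring
        have hdiff : Real.log ((a:ℝ)+1) - Real.log (a:ℝ) ≤ 1/(a:ℝ) := by
          rw [← Real.log_div (ne_of_gt ha1) (ne_of_gt ha0)]
          have := Real.log_le_sub_one_of_pos (show (0:ℝ) < ((a:ℝ)+1)/(a:ℝ) by positivity)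
          have heq : ((a:ℝ)+1)/(a:ℝ) - 1 = 1/(a:ℝ) := by field_simp; ring
          linarith
        have : (a:ℝ) * (Real.log ((a:ℝ)+1) - Real.log (a:ℝ)) ≤ 1 := by
          calc (a:ℝ) * (Real.log ((a:ℝ)+1) - Real.log (a:ℝ)) ≤ (a:ℝ) * (1/(a:ℝ)) :=
            mul_le_mul_of_nonneg_left hdiff (by positivity)
          _ = 1 := by field_simp
        calc D ≤ Real.log ((a:ℝ)+1) + 1 := by rw [hsplit]; linarith
        _ ≤ Real.log ((a:ℝ)+1) + Real.log ((a:ℝ)+1) := by linarith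
        _ ≤ 2 * Real.log n := by linarith
    rw [abs_div, abs_of_nonneg (le_of_lt hn0)]
    apply (div_le_div_iff_of_pos_right hn0).2
    rw [abs_le]
    constructor <;> linarith

section counts
variable {n m : ℕ}


lemma empDist_eq (ω : Fin n → Fin m) (k : Fin m) : empDist ω k = (cnt ω k : ℝ) / n := rfl

lemma cnt_le (ω : Fin n → Fin m) (k : Fin m) : cnt ω k ≤ n := by
  calc cnt ω k ≤ Finset.univ.card := Finset.card_filter_le _ _
  _ = n := Finset.card_univ.trans (Fintype.card_fin n)

lemma cnt_A (ω : Fin n → Fin m) (i : Fin n) (x : Fin m) (hx : ¬ x = ω i) :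
    cnt (Function.update ω i x) x = cnt ω x + 1 := by
  unfold cnt
  have hset : Finset.univ.filter (fun j => Function.update ω i x j = x)
      = insert i (Finset.univ.filter (fun j => ω j = x)) := by
    ext j
    simp only [Finset.mem_filter, Finset.mem_univ, true_and, Finset.mem_insert]
    rcases eq_or_ne j i with rfl | hji
    · simp
    · simp [Function.update_of_ne hji, hji]
  rw [hset, Finset.card_insert_of_notMem (by
    simp only [Finset.mem_filter, Finset.mem_univ, true_and]
    exact fun h => hx h.symm)]

lemma cnt_B (ω : Fin n → Fin m) (i : Fin n) (x : Fin m) (hx : ¬ x = ω i) :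
    cnt ω (ω i) = cnt (Function.update ω i x) (ω i) + 1 := by
  unfold cnt
  have hset : Finset.univ.filter (fun j => ω j = ω i)
      = insert i (Finset.univ.filter (fun j => Function.update ω i x j = ω i)) := by
    ext j
    simp only [Finset.mem_filter, Finset.mem_univ, true_and, Finset.mem_insert]
    rcases eq_or_ne j i with rfl | hji
    · simp
    · simp [Function.update_of_ne hji, hji]
  rw [hset, Finset.card_insert_of_notMem (by simp [Function.update_self, hx])]

lemma cnt_C (ω : Fin n → Fin m) (i : Fin n) (x : Fin m) (k : Fin m) (hk1 : ¬ k = x)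
    (hk2 : ¬ k = ω i) : cnt (Function.update ω i x) k = cnt ω k := by
  unfold cnt
  congr 1
  ext j
  simp only [Finset.mem_filter, Finset.mem_univ, true_and]
  rcases eq_or_ne j i with rfl | hji
  · simp only [Function.update_self]
    constructor
    · intro h; exact absurd h.symm hk1
    · intro h; exact absurd h.symm hk2
  · rw [Function.update_of_ne hji]

lemma cnt_add_one_le (ω : Fin n → Fin m) (i : Fin n) (x : Fin m) (hx : ¬ x = ω i) :
    cnt ω x + 1 ≤ n := by
  have hsub : Finset.univ.filter (fun j => ω j = x) ⊆ Finset.univ.erase i := by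
    intro j hj
    rw [Finset.mem_filter] at hj
    rw [Finset.mem_erase]
    refine ⟨?_, Finset.mem_univ j⟩
    rintro rfl
    exact hx hj.2.symm
  have h1 := Finset.card_le_card hsub
  rw [Finset.card_erase_of_mem (Finset.mem_univ i), Finset.card_univ, Fintype.card_fin] at h1
  have hn : 1 ≤ n := Fin.pos i
  unfold cnt
  omega

lemma entropy_empDist (ω : Fin n → Fin m) :
    entropy (empDist ω) = ∑ k, -((cnt ω k : ℝ)/n * Real.log ((cnt ω k : ℝ)/n)) := by
  rw [entropy, ← Finset.sum_neg_distrib]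
  rfl

lemma entropy_empDist_bd (hn : 1 ≤ n) (ω : Fin n → Fin m) (i : Fin n) (x : Fin m) :
    |entropy (empDist (Function.update ω i x)) - entropy (empDist ω)|
      ≤ 2 * Real.log n / n := by
  have hnn : (0:ℝ) ≤ 2 * Real.log n / n := by
    have := Real.log_natCast_nonneg n
    positivity
  by_cases hx : x = ω i
  · rw [hx, Function.update_eq_self, sub_self, abs_zero]; exact hnn
  · set ω' := Function.update ω i x with hω'
    set d : Fin m → ℝ := fun k => -((cnt ω' k : ℝ)/n * Real.log ((cnt ω' k : ℝ)/n))
      - -((cnt ω k : ℝ)/n * Real.log ((cnt ω k : ℝ)/n)) with hd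
    have hsum : entropy (empDist ω') - entropy (empDist ω) = ∑ k, d k := by
      rw [entropy_empDist, entropy_empDist, ← Finset.sum_sub_distrib]
    have hzero : ∀ k, ¬ k = x → ¬ k = ω i → d k = 0 := by
      intro k h1 h2
      rw [hd]
      simp only [hω', cnt_C ω i x k h1 h2, sub_self]
    have hdx : |d x| ≤ Real.log n / n := by
      rw [hd]
      simp only [hω', cnt_A ω i x hx]
      have := phi_step n (cnt ω x) (cnt_add_one_le ω i x hx)
      push_cast
      push_cast at this
      exact this
    have hdωi : |d (ω i)| ≤ Real.log n / n := by
      rw [hd]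
      obtain ⟨a, ha⟩ : ∃ a, cnt ω (ω i) = a + 1 := ⟨cnt ω' (ω i), cnt_B ω i x hx⟩
      have ha' : cnt ω' (ω i) = a := by
        have h2 := cnt_B ω i x hx
        rw [← hω'] at h2
        omega
      have hle : a + 1 ≤ n := ha ▸ cnt_le ω (ω i)
      simp only [ha, ha']
      rw [abs_sub_comm]
      have := phi_step n a hle
      push_cast
      push_cast at this
      exact this
    rw [hsum]
    have hss : ∑ k, d k = ∑ k ∈ ({x, ω i} : Finset (Fin m)), d k := by
      symm
      apply Finset.sum_subset (Finset.subset_univ _)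
      intro k _ hk
      simp only [Finset.mem_insert, Finset.mem_singleton, not_or] at hk
      exact hzero k hk.1 hk.2
    rw [hss, Finset.sum_pair hx]
    calc |d x + d (ω i)| ≤ |d x| + |d (ω i)| := abs_add_le _ _
    _ ≤ Real.log n / n + Real.log n / n := add_le_add hdx hdωi
    _ = 2 * Real.log n / n := by ring


section marg
variable {n m : ℕ}

lemma marg {κ : Type*} [Fintype κ] (h : Fin n → κ → ℝ) :
    ∑ ω : Fin n → κ, ∏ i, h i (ω i) = ∏ i, ∑ x, h i x := by
  rw [← Fintype.piFinset_univ, Finset.sum_prod_piFinset]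

lemma marg_prod (p : Fin m → ℝ) (hp1 : ∑ k, p k = 1) (k : Fin m) (s : Finset (Fin n)) :
    ∑ ω : Fin n → Fin m, (∏ j, p (ω j)) * (∏ i ∈ s, (if ω i = k then (1:ℝ) else 0))
      = p k ^ s.card := by
  set H : Fin n → Fin m → ℝ := fun j x => if j ∈ s then (if x = k then p x else 0) else p x
    with hH
  have hrw : ∀ ω : Fin n → Fin m,
      (∏ j, p (ω j)) * (∏ i ∈ s, (if ω i = k then (1:ℝ) else 0)) = ∏ j, H j (ω j) := by
    intro ω
    have e1 : ∏ j, H j (ω j)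
        = (∏ j ∈ s, (if ω j = k then p (ω j) else 0)) * ∏ j ∈ sᶜ, p (ω j) := by
      rw [hH, Finset.prod_ite]
      congr 2
      · ext j; simp
      · ext j; simp
    have e2 : ∏ j ∈ s, (if ω j = k then p (ω j) else 0)
        = (∏ j ∈ s, p (ω j)) * ∏ j ∈ s, (if ω j = k then (1:ℝ) else 0) := by
      rw [← Finset.prod_mul_distrib]
      apply Finset.prod_congr rfl
      intro j _
      split_ifs <;> ring
    rw [e1, e2, ← Finset.prod_mul_prod_compl s (fun j => p (ω j))]
    ring
  rw [Finset.sum_congr rfl (fun ω _ => hrw ω), marg]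
  have e3 : ∀ j, (∑ x, H j x) = if j ∈ s then p k else 1 := by
    intro j
    rw [hH]
    by_cases hj : j ∈ s
    · simp only [hj, if_true]
      rw [Finset.sum_ite_eq' Finset.univ k p]
      simp
    · simp only [hj, if_false, hp1]
  rw [Finset.prod_congr rfl (fun j _ => e3 j), Finset.prod_ite_mem, Finset.univ_inter,
    Finset.prod_const]

lemma cnt_cast (ω : Fin n → Fin m) (k : Fin m) :
    ((cnt ω k : ℕ) : ℝ) = ∑ i, (if ω i = k then (1:ℝ) else 0) := by
  unfold cnt
  rw [Finset.card_filter]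
  push_cast
  apply Finset.sum_congr rfl
  intro i _
  split_ifs <;> norm_num

lemma sum_cnt (ω : Fin n → Fin m) : ∑ k, cnt ω k = n := by
  unfold cnt
  rw [← Finset.card_eq_sum_card_fiberwise (f := ω) (fun i _ => Finset.mem_univ (ω i)),
    Finset.card_univ, Fintype.card_fin]

lemma empDist_nonneg (ω : Fin n → Fin m) (k : Fin m) : 0 ≤ empDist ω k := by
  unfold empDist; positivity

lemma sum_empDist (hn : 1 ≤ n) (ω : Fin n → Fin m) : ∑ k, empDist ω k = 1 := by
  unfold empDist
  rw [← Finset.sum_div]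
  rw [show ∑ k, ((Finset.univ.filter (fun i : Fin n => ω i = k)).card : ℝ)
      = ((∑ k, cnt ω k : ℕ) : ℝ) by push_cast [cnt]; rfl]
  rw [sum_cnt]
  have : (0:ℝ) < n := by exact_mod_cast hn
  field_simp

lemma EempDist (p : Fin m → ℝ) (hp1 : ∑ k, p k = 1) (hn : 1 ≤ n) (k : Fin m) :
    ∑ ω : Fin n → Fin m, (∏ j, p (ω j)) * empDist ω k = p k := by
  have hn0 : ((n:ℝ)) ≠ 0 := by positivity
  have key : ∀ ω : Fin n → Fin m, (∏ j, p (ω j)) * empDist ω k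
      = (∑ i, (∏ j, p (ω j)) * (if ω i = k then (1:ℝ) else 0)) / n := by
    intro ω
    rw [empDist, show ((Finset.univ.filter (fun i : Fin n => ω i = k)).card : ℝ)
      = ((cnt ω k : ℕ) : ℝ) from rfl, cnt_cast, ← Finset.mul_sum]
    ring
  rw [Finset.sum_congr rfl (fun ω _ => key ω), ← Finset.sum_div, Finset.sum_comm]
  have inner : ∀ i : Fin n, ∑ ω : Fin n → Fin m, (∏ j, p (ω j)) * (if ω i = k then (1:ℝ) else 0)
      = p k := by
    intro i
    have := marg_prod p hp1 k {i}
    simpa using this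
  rw [Finset.sum_congr rfl (fun i _ => inner i), Finset.sum_const, Finset.card_univ,
    Fintype.card_fin]
  field_simp
  rw [nsmul_eq_mul]

lemma EempDist_sq (p : Fin m → ℝ) (hp1 : ∑ k, p k = 1) (hn : 1 ≤ n) (k : Fin m) :
    ∑ ω : Fin n → Fin m, (∏ j, p (ω j)) * (empDist ω k)^2
      = p k / n + (1 - 1/(n:ℝ)) * (p k)^2 := by
  have hn0 : ((n:ℝ)) ≠ 0 := by positivity
  have key : ∀ ω : Fin n → Fin m, (∏ j, p (ω j)) * (empDist ω k)^2
      = (∑ i, ∑ i', (∏ j, p (ω j)) * ((if ω i = k then (1:ℝ) else 0)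
          * (if ω i' = k then (1:ℝ) else 0))) / (n:ℝ)^2 := by
    intro ω
    rw [empDist, show ((Finset.univ.filter (fun i : Fin n => ω i = k)).card : ℝ)
      = ((cnt ω k : ℕ) : ℝ) from rfl, cnt_cast]
    rw [div_pow, sq (∑ i, (if ω i = k then (1:ℝ) else 0)), Finset.sum_mul_sum,
      ← mul_div_assoc]
    congr 1
    rw [Finset.mul_sum]
    apply Finset.sum_congr rfl; intro i _
    rw [Finset.mul_sum]
  rw [Finset.sum_congr rfl (fun ω _ => key ω), ← Finset.sum_div]
  rw [Finset.sum_comm]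
  have swap2 : ∀ i : Fin n, ∑ ω : Fin n → Fin m, ∑ i', (∏ j, p (ω j)) * ((if ω i = k then (1:ℝ) else 0)
          * (if ω i' = k then (1:ℝ) else 0))
      = ∑ i', ∑ ω : Fin n → Fin m, (∏ j, p (ω j)) * ((if ω i = k then (1:ℝ) else 0)
          * (if ω i' = k then (1:ℝ) else 0)) := fun i => Finset.sum_comm
  rw [Finset.sum_congr rfl (fun i _ => swap2 i)]
  have inner : ∀ i i' : Fin n, ∑ ω : Fin n → Fin m, (∏ j, p (ω j)) * ((if ω i = k then (1:ℝ) else 0)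
          * (if ω i' = k then (1:ℝ) else 0))
      = if i' = i then p k else (p k)^2 := by
    intro i i'
    by_cases hii : i' = i
    · subst hii
      have hind : ∀ ω : Fin n → Fin m, ((if ω i' = k then (1:ℝ) else 0)
          * (if ω i' = k then (1:ℝ) else 0)) = ∏ j ∈ ({i'} : Finset (Fin n)), (if ω j = k then (1:ℝ) else 0) := by
        intro ω; rw [Finset.prod_singleton]; split_ifs <;> ring
      rw [Finset.sum_congr rfl (fun ω _ => by rw [hind ω]), marg_prod p hp1 k {i'}]
      simp
    · have hind : ∀ ω : Fin n → Fin m, ((if ω i = k then (1:ℝ) else 0)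
          * (if ω i' = k then (1:ℝ) else 0)) = ∏ j ∈ ({i, i'} : Finset (Fin n)), (if ω j = k then (1:ℝ) else 0) := by
        intro ω
        rw [Finset.prod_pair (fun h => hii h.symm)]
      rw [Finset.sum_congr rfl (fun ω _ => by rw [hind ω]), marg_prod p hp1 k {i, i'},
        Finset.card_pair (fun h => hii h.symm), if_neg hii]
  rw [Finset.sum_congr rfl (fun i _ => Finset.sum_congr rfl (fun i' _ => inner i i'))]
  have row : ∀ i : Fin n, ∑ i', (if i' = i then p k else (p k)^2)
      = (n:ℝ) * (p k)^2 + (p k - (p k)^2) := by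
    intro i
    have split : ∀ i' : Fin n, (if i' = i then p k else (p k)^2)
        = (p k)^2 + (if i' = i then p k - (p k)^2 else 0) := by
      intro i'; split_ifs <;> ring
    rw [Finset.sum_congr rfl (fun i' _ => split i'), Finset.sum_add_distrib,
      Finset.sum_const, Finset.card_univ, Fintype.card_fin,
      Finset.sum_ite_eq' Finset.univ i (fun _ => p k - (p k)^2)]
    simp [nsmul_eq_mul]
  rw [Finset.sum_congr rfl (fun i _ => row i), Finset.sum_const, Finset.card_univ,
    Fintype.card_fin, nsmul_eq_mul]
  field_simp
  ring
end marg

section bias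
variable {n m : ℕ}

lemma entropy_nonneg' {m : ℕ} (d : Fin m → ℝ) (h0 : ∀ k, 0 ≤ d k) (h1 : ∑ k, d k = 1) :
    0 ≤ entropy d := by
  rw [entropy, ← Finset.sum_neg_distrib]
  apply Finset.sum_nonneg
  intro k _
  rcases eq_or_lt_of_le (h0 k) with hk | hk
  · simp [← hk]
  · have hd1 : d k ≤ 1 := by
      calc d k = d k + (∑ j ∈ Finset.univ.erase k, d j) - (∑ j ∈ Finset.univ.erase k, d j) := by ring
      _ = 1 - (∑ j ∈ Finset.univ.erase k, d j) := by
          rw [Finset.add_sum_erase _ d (Finset.mem_univ k), h1]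
      _ ≤ 1 := by
          have : 0 ≤ ∑ j ∈ Finset.univ.erase k, d j :=
            Finset.sum_nonneg (fun j _ => h0 j)
          linarith
    have : Real.log (d k) ≤ 0 := Real.log_nonpos (le_of_lt hk) hd1
    nlinarith

lemma entropy_le_log {m : ℕ} (hm : 1 ≤ m) (d : Fin m → ℝ) (h0 : ∀ k, 0 ≤ d k)
    (h1 : ∑ k, d k = 1) : entropy d ≤ Real.log m := by
  have hm0 : (0:ℝ) < m := by exact_mod_cast hm
  have key : ∀ k, -(d k * Real.log (d k)) ≤ 1/(m:ℝ) - d k + d k * Real.log m := by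
    intro k
    rcases eq_or_lt_of_le (h0 k) with hk | hk
    · have hpos : (0:ℝ) ≤ 1/(m:ℝ) := by positivity
      rw [← hk]; simpa using hpos
    · have hlog : Real.log (1/(d k * m)) ≤ 1/(d k * m) - 1 :=
        Real.log_le_sub_one_of_pos (by positivity)
      rw [Real.log_div one_ne_zero (by positivity), Real.log_one,
        Real.log_mul (ne_of_gt hk) (ne_of_gt hm0)] at hlog
      have h2 : 1/(d k * m) - 1 = 1/((d k) * m) - 1 := rfl
      have h3 := mul_le_mul_of_nonneg_left hlog (le_of_lt hk)
      have h4 : d k * (1/(d k * m) - 1) = 1/(m:ℝ) - d k := by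
        field_simp
      nlinarith
  calc entropy d = ∑ k, -(d k * Real.log (d k)) := by
        rw [entropy, ← Finset.sum_neg_distrib]
  _ ≤ ∑ k, (1/(m:ℝ) - d k + d k * Real.log m) := Finset.sum_le_sum (fun k _ => key k)
  _ = (m:ℝ) * (1/(m:ℝ)) - 1 + Real.log m := by
      rw [Finset.sum_add_distrib, Finset.sum_sub_distrib, ← Finset.sum_mul, h1,
        Finset.sum_const, Finset.card_univ, Fintype.card_fin, nsmul_eq_mul]
      ring
  _ = Real.log m := by field_simp; ring

lemma prod_pos_of_ne_zero (p : Fin m → ℝ) (hp0 : ∀ k, 0 ≤ p k) (ω : Fin n → Fin m)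
    (hW : 0 < ∏ j, p (ω j)) (i : Fin n) : 0 < p (ω i) := by
  rcases eq_or_lt_of_le (hp0 (ω i)) with h | h
  · exfalso
    have : (∏ j, p (ω j)) = 0 := Finset.prod_eq_zero (Finset.mem_univ i) h.symm
    linarith
  · exact h

lemma empDist_pos_imp (p : Fin m → ℝ) (hp0 : ∀ k, 0 ≤ p k) (ω : Fin n → Fin m)
    (hW : 0 < ∏ j, p (ω j)) (k : Fin m) (hk : 0 < empDist ω k) : 0 < p k := by
  have hcnt : (Finset.univ.filter (fun i : Fin n => ω i = k)).card ≠ 0 := by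
    intro h
    rw [empDist, h] at hk
    norm_num at hk
  obtain ⟨i, hi⟩ := Finset.card_pos.1 (Nat.pos_of_ne_zero hcnt)
  rw [Finset.mem_filter] at hi
  rw [← hi.2]
  exact prod_pos_of_ne_zero p hp0 ω hW i

lemma bias_bound (p : Fin m → ℝ) (hp0 : ∀ k, 0 ≤ p k) (hp1 : ∑ k, p k = 1)
    (hn : 1 ≤ n) :
    |(∑ ω : Fin n → Fin m, (∏ j, p (ω j)) * entropy (empDist ω)) - entropy p|
      ≤ ((m:ℝ) - 1)/n := by
  have hn0 : (0:ℝ) < n := by exact_mod_cast hn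
  set W : (Fin n → Fin m) → ℝ := fun ω => ∏ j, p (ω j) with hWdef
  have hWnn : ∀ ω, 0 ≤ W ω := fun ω => Finset.prod_nonneg (fun j _ => hp0 _)
  have hW1 : ∑ ω, W ω = 1 := by
    rw [hWdef]
    rw [marg (fun _ x => p x)]
    simp [hp1]
  set KL : (Fin n → Fin m) → ℝ := fun ω =>
    ∑ k, (empDist ω k * Real.log (empDist ω k) - empDist ω k * Real.log (p k)) with hKL
  have i1 : ∑ ω, W ω * (∑ k, empDist ω k * Real.log (p k)) = ∑ k, p k * Real.log (p k) := by
    calc ∑ ω, W ω * (∑ k, empDist ω k * Real.log (p k))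
        = ∑ ω : Fin n → Fin m, ∑ k, (W ω * empDist ω k) * Real.log (p k) :=
          Finset.sum_congr rfl (fun ω _ => by
            rw [Finset.mul_sum]
            exact Finset.sum_congr rfl (fun k _ => by ring))
      _ = ∑ k, ∑ ω : Fin n → Fin m, (W ω * empDist ω k) * Real.log (p k) := Finset.sum_comm
      _ = ∑ k, (∑ ω : Fin n → Fin m, W ω * empDist ω k) * Real.log (p k) :=
          Finset.sum_congr rfl (fun k _ => by rw [Finset.sum_mul])
      _ = ∑ k, p k * Real.log (p k) := by
          refine Finset.sum_congr rfl (fun k _ => ?_)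
          congr 1
          simp only [hWdef]
          exact EempDist p hp1 hn k
  have ident : entropy p - (∑ ω, W ω * entropy (empDist ω)) = ∑ ω, W ω * KL ω := by
    have i2 : ∑ ω, W ω * KL ω
        = ∑ ω, (W ω * (∑ k, empDist ω k * Real.log (empDist ω k))
            - W ω * (∑ k, empDist ω k * Real.log (p k))) := by
      refine Finset.sum_congr rfl (fun ω _ => ?_)
      rw [hKL]
      simp only []
      rw [Finset.sum_sub_distrib, mul_sub]
    rw [i2, Finset.sum_sub_distrib, i1, entropy]
    have i3 : ∑ ω, W ω * entropy (empDist ω)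
        = -∑ ω, W ω * (∑ k, empDist ω k * Real.log (empDist ω k)) := by
      rw [← Finset.sum_neg_distrib]
      refine Finset.sum_congr rfl (fun ω _ => ?_)
      rw [entropy]; ring
    rw [i3]; ring
  have KLnn : ∀ ω, 0 < W ω → 0 ≤ KL ω := by
    intro ω hW
    have hterm : ∀ k, empDist ω k - (if 0 < empDist ω k then p k else 0)
        ≤ empDist ω k * Real.log (empDist ω k) - empDist ω k * Real.log (p k) := by
      intro k
      rcases eq_or_lt_of_le (empDist_nonneg ω k) with he | he
      · rw [if_neg (by rw [← he]; exact lt_irrefl 0), ← he]; simp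
      · rw [if_pos he]
        have hpk : 0 < p k := empDist_pos_imp p hp0 ω hW k he
        have hlog : Real.log (p k / empDist ω k) ≤ p k / empDist ω k - 1 :=
          Real.log_le_sub_one_of_pos (by positivity)
        rw [Real.log_div (ne_of_gt hpk) (ne_of_gt he)] at hlog
        have h3 := mul_le_mul_of_nonneg_left hlog (le_of_lt he)
        have h4 : empDist ω k * (p k / empDist ω k - 1) = p k - empDist ω k := by
          field_simp
        nlinarith
    have hsum := Finset.sum_le_sum (s := Finset.univ) (fun k _ => hterm k)
    rw [hKL]
    simp only []
    rw [Finset.sum_sub_distrib]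
    rw [Finset.sum_sub_distrib] at hsum
    rw [Finset.sum_sub_distrib] at hsum
    rw [sum_empDist hn ω] at hsum
    have h6 : (∑ k, if 0 < empDist ω k then p k else 0) ≤ 1 := by
      rw [← hp1]
      exact Finset.sum_le_sum (fun k _ => by split_ifs; exacts [le_refl _, hp0 k])
    linarith
  have KLub : ∀ ω, 0 < W ω → KL ω
      ≤ ∑ k, (if 0 < p k then (empDist ω k)^2/(p k) - empDist ω k else 0) := by
    intro ω hW
    rw [hKL]
    simp only []
    refine Finset.sum_le_sum (fun k _ => ?_)
    rcases eq_or_lt_of_le (empDist_nonneg ω k) with he | he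
    · rw [← he]
      split_ifs with hpk <;> simp
    · have hpk : 0 < p k := empDist_pos_imp p hp0 ω hW k he
      rw [if_pos hpk]
      have hlog : Real.log (empDist ω k / p k) ≤ empDist ω k / p k - 1 :=
        Real.log_le_sub_one_of_pos (by positivity)
      rw [Real.log_div (ne_of_gt he) (ne_of_gt hpk)] at hlog
      have h3 := mul_le_mul_of_nonneg_left hlog (le_of_lt he)
      have h4 : empDist ω k * (empDist ω k / p k - 1) = (empDist ω k)^2 / p k - empDist ω k := by
        field_simp
      nlinarith
  have lower : 0 ≤ ∑ ω, W ω * KL ω := by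
    apply Finset.sum_nonneg
    intro ω _
    rcases eq_or_lt_of_le (hWnn ω) with h | h
    · rw [← h, zero_mul]
    · exact mul_nonneg (le_of_lt h) (KLnn ω h)
  have upper : ∑ ω, W ω * KL ω ≤ ((m:ℝ) - 1)/n := by
    calc ∑ ω, W ω * KL ω
        ≤ ∑ ω, W ω * (∑ k, (if 0 < p k then (empDist ω k)^2/(p k) - empDist ω k else 0)) := by
          refine Finset.sum_le_sum (fun ω _ => ?_)
          rcases eq_or_lt_of_le (hWnn ω) with h | h
          · rw [← h, zero_mul, zero_mul]
          · exact mul_le_mul_of_nonneg_left (KLub ω h) (le_of_lt h)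
      _ = ∑ k, ∑ ω : Fin n → Fin m, W ω * (if 0 < p k then (empDist ω k)^2/(p k) - empDist ω k else 0) := by
          rw [← Finset.sum_comm]
          exact Finset.sum_congr rfl (fun ω _ => by rw [Finset.mul_sum])
      _ ≤ ∑ k, (1 - p k)/n := by
          refine Finset.sum_le_sum (fun k _ => ?_)
          by_cases hpk : 0 < p k
          · have heq : ∑ ω : Fin n → Fin m, W ω * (if 0 < p k then (empDist ω k)^2/(p k) - empDist ω k else 0)
                = (∑ ω : Fin n → Fin m, W ω * (empDist ω k)^2)/(p k)
                  - ∑ ω : Fin n → Fin m, W ω * empDist ω k := by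
              simp only [if_pos hpk]
              rw [Finset.sum_div, ← Finset.sum_sub_distrib]
              refine Finset.sum_congr rfl (fun ω _ => ?_)
              field_simp
            rw [heq]
            have e1 : ∑ ω : Fin n → Fin m, W ω * (empDist ω k)^2
                = p k / n + (1 - 1/(n:ℝ)) * (p k)^2 := by
              simp only [hWdef]
              exact EempDist_sq p hp1 hn k
            have e2 : ∑ ω : Fin n → Fin m, W ω * empDist ω k = p k := by
              simp only [hWdef]
              exact EempDist p hp1 hn k
            rw [e1, e2]
            have : (p k / n + (1 - 1/(n:ℝ)) * (p k)^2)/(p k) - p k = (1 - p k)/n := by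
              field_simp
              ring
            rw [this]
          · simp only [if_neg hpk, mul_zero, Finset.sum_const_zero]
            have hpk0 : p k = 0 := le_antisymm (not_lt.1 hpk) (hp0 k)
            have h1n : (0:ℝ) ≤ 1/(n:ℝ) := by positivity
            rw [hpk0]
            simpa using h1n
      _ = ((m:ℝ) - 1)/n := by
          rw [show ∑ k : Fin m, (1 - p k)/(n:ℝ) = (∑ k : Fin m, (1 - p k))/(n:ℝ) from
            (Finset.sum_div _ _ _).symm, Finset.sum_sub_distrib, hp1, Finset.sum_const,
            Finset.card_univ, Fintype.card_fin, nsmul_eq_mul, mul_one]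
  rw [abs_sub_comm, ident, abs_of_nonneg lower]
  exact upper
end bias

/-- Entropy estimation deviation: if `p̂_n` is the empirical distribution of `n` i.i.d.
samples from `p ∈ Δ_{m−1}` (the sample space being `(Fin m)^n` with the i.i.d. product
probabilities `∏ᵢ p(ωᵢ)`), then with probability at least `1 − δ`,
`|H(p̂_n) − H(p)| ≤ √(2 log²(n) log(2/δ)/n)
  + min(((m−1)·log(e(1 + n/(m−1))) + 1)/n, log m)`. -/
theorem entropy_estimation_deviation (n m : ℕ) (hn : 1 ≤ n) (hm : 1 ≤ m)
    (p : Fin m → ℝ) (hp : p ∈ stdSimplex ℝ (Fin m)) (δ : ℝ) (hδ : δ ∈ Set.Ioc (0:ℝ) 1) :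
    (∑ ω : Fin n → Fin m,
        if ¬ (|entropy (empDist ω) - entropy p|
            ≤ Real.sqrt (2 * Real.log n ^ 2 * Real.log (2 / δ) / n)
              + min ((((m : ℝ) - 1) * Real.log (Real.exp 1 * (1 + n / ((m : ℝ) - 1))) + 1) / n)
                  (Real.log m))
        then ∏ i, p (ω i) else 0)
      ≤ δ := by
  obtain ⟨hδ0, hδ1⟩ := hδ
  have hp0 : ∀ k, 0 ≤ p k := fun k => hp.1 k
  have hp1 : ∑ k, p k = 1 := hp.2
  have hn0R : (0:ℝ) < n := by exact_mod_cast hn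
  have hm0R : (0:ℝ) < m := by exact_mod_cast hm
  have hB0 : 0 ≤ Real.sqrt (2 * Real.log n ^ 2 * Real.log (2 / δ) / n) := Real.sqrt_nonneg _
  have hWnn : ∀ ω : Fin n → Fin m, 0 ≤ ∏ i, p (ω i) :=
    fun ω => Finset.prod_nonneg (fun i _ => hp0 _)
  by_cases hcase : Real.log m
      ≤ ((((m : ℝ) - 1) * Real.log (Real.exp 1 * (1 + n / ((m : ℝ) - 1))) + 1) / n)
  · -- deterministic case: the bad event is empty
    simp only [min_eq_right hcase]
    have hzero : (∑ ω : Fin n → Fin m,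
        if ¬ (|entropy (empDist ω) - entropy p|
            ≤ Real.sqrt (2 * Real.log n ^ 2 * Real.log (2 / δ) / n) + Real.log m)
        then ∏ i, p (ω i) else 0) = 0 := by
      apply Finset.sum_eq_zero
      intro ω _
      have h1 : 0 ≤ entropy (empDist ω) :=
        entropy_nonneg' _ (empDist_nonneg ω) (sum_empDist hn ω)
      have h2 : entropy (empDist ω) ≤ Real.log m :=
        entropy_le_log hm _ (empDist_nonneg ω) (sum_empDist hn ω)
      have h3 : 0 ≤ entropy p := entropy_nonneg' p hp0 hp1
      have h4 : entropy p ≤ Real.log m := entropy_le_log hm p hp0 hp1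
      have hgood : |entropy (empDist ω) - entropy p|
          ≤ Real.sqrt (2 * Real.log n ^ 2 * Real.log (2 / δ) / n) + Real.log m :=
        abs_le.2 ⟨by linarith, by linarith⟩
      rw [if_neg (not_not_intro hgood)]
    rw [hzero]
    linarith
  · -- concentration case
    push_neg at hcase
    set T1 : ℝ := (((m : ℝ) - 1) * Real.log (Real.exp 1 * (1 + n / ((m : ℝ) - 1))) + 1) / n
      with hT1def
    simp only [min_eq_left (le_of_lt hcase)]
    -- T1 ≥ m / n
    have hx0 : (0:ℝ) ≤ (n:ℝ) / ((m:ℝ) - 1) := by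
      apply div_nonneg (le_of_lt hn0R)
      have : (1:ℝ) ≤ m := by exact_mod_cast hm
      linarith
    have hloge : 1 ≤ Real.log (Real.exp 1 * (1 + n / ((m : ℝ) - 1))) := by
      rw [Real.log_mul (Real.exp_ne_zero 1) (by linarith : (1:ℝ) + n / ((m:ℝ)-1) ≠ 0),
        Real.log_exp]
      have := Real.log_nonneg (by linarith : (1:ℝ) ≤ 1 + n / ((m:ℝ)-1))
      linarith
    have hm1 : (0:ℝ) ≤ (m:ℝ) - 1 := by
      have : (1:ℝ) ≤ m := by exact_mod_cast hm
      linarith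
    have hT1lb : ((m:ℝ) - 1 + 1) / n ≤ T1 := by
      rw [hT1def]
      apply (div_le_div_iff_of_pos_right hn0R).2
      have := mul_le_mul_of_nonneg_left hloge hm1
      linarith
    -- n ≥ 2
    have hn2 : 2 ≤ n := by
      by_contra h
      have hn1 : n = 1 := by omega
      subst hn1
      have hlogm : Real.log m ≤ (m:ℝ) - 1 := by
        have := Real.log_le_sub_one_of_pos hm0R
        linarith
      norm_num at hT1lb
      linarith
    have hlogn : 0 < Real.log n := Real.log_pos (by exact_mod_cast hn2)
    -- McDiarmid application
    haveI : Nonempty (Fin m) := ⟨⟨0, hm⟩⟩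
    set c : ℝ := 2 * Real.log n / n with hcdef
    have hc0 : 0 ≤ c := by positivity
    have hnc : 0 < (n:ℝ) * c^2 := by positivity
    have hL : 0 < Real.log (2/δ) := Real.log_pos (by rw [lt_div_iff₀ hδ0]; linarith)
    set s : ℝ := Real.sqrt (2 * Real.log n ^ 2 * Real.log (2 / δ) / n) with hsdef
    have hargpos : 0 < 2 * Real.log n ^ 2 * Real.log (2 / δ) / n := by positivity
    have hs0 : 0 < s := Real.sqrt_pos.2 hargpos
    have hbd : ∀ (ω : Fin n → Fin m) (i : Fin n) (x : Fin m),
        |(fun ω => entropy (empDist ω)) (Function.update ω i x)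
          - (fun ω => entropy (empDist ω)) ω| ≤ c :=
      fun ω i x => entropy_empDist_bd hn ω i x
    have htail := mcdiarmid_tail p hp0 hp1 n (fun ω => entropy (empDist ω)) c hc0 hbd s hs0 hnc
    set Ef : ℝ := ∑ ω' : Fin n → Fin m, (∏ i, p (ω' i)) * entropy (empDist ω') with hEfdef
    have hbias : |Ef - entropy p| ≤ ((m:ℝ) - 1)/n := bias_bound p hp0 hp1 hn
    have hbiasT1 : |Ef - entropy p| ≤ T1 := by
      have h1n : (0:ℝ) < 1/n := by positivity
      calc |Ef - entropy p| ≤ ((m:ℝ) - 1)/n := hbias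
      _ ≤ ((m:ℝ) - 1 + 1)/n := by apply (div_le_div_iff_of_pos_right hn0R).2; linarith
      _ ≤ T1 := hT1lb
    -- event inclusion
    have hincl : (∑ ω : Fin n → Fin m,
        if ¬ (|entropy (empDist ω) - entropy p| ≤ s + T1) then ∏ i, p (ω i) else 0)
        ≤ ∑ ω : Fin n → Fin m,
          (if s ≤ |(fun ω => entropy (empDist ω)) ω - Ef| then ∏ i, p (ω i) else 0) := by
      apply Finset.sum_le_sum
      intro ω _
      by_cases hev : ¬ (|entropy (empDist ω) - entropy p| ≤ s + T1)
      · rw [if_pos hev]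
        push_neg at hev
        have htri : |entropy (empDist ω) - entropy p|
            ≤ |entropy (empDist ω) - Ef| + |Ef - entropy p| := abs_sub_le _ _ _
        have : s ≤ |(fun ω => entropy (empDist ω)) ω - Ef| := by
          simp only []
          linarith
        rw [if_pos this]
      · rw [if_neg hev]
        split <;> [exact hWnn ω; exact le_refl 0]
    -- final computation
    have hfinal : 2 * Real.exp (-2*s^2/((n:ℝ)*c^2)) = δ := by
      have hs2 : s^2 = 2 * Real.log n ^ 2 * Real.log (2 / δ) / n := by
        rw [hsdef, Real.sq_sqrt (le_of_lt hargpos)]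
      have hexp : -2*s^2/((n:ℝ)*c^2) = -Real.log (2/δ) := by
        rw [hs2, hcdef]
        have hlnn : Real.log n ≠ 0 := ne_of_gt hlogn
        have hnn : (n:ℝ) ≠ 0 := ne_of_gt hn0R
        field_simp
      rw [hexp, Real.exp_neg, Real.exp_log (by positivity : (0:ℝ) < 2/δ)]
      field_simp
    calc (∑ ω : Fin n → Fin m,
        if ¬ (|entropy (empDist ω) - entropy p| ≤ s + T1) then ∏ i, p (ω i) else 0)
        ≤ ∑ ω : Fin n → Fin m,
          (if s ≤ |(fun ω => entropy (empDist ω)) ω - Ef| then ∏ i, p (ω i) else 0) := hincl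
      _ ≤ 2 * Real.exp (-2*s^2/((n:ℝ)*c^2)) := htail
      _ = δ := hfinal
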